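/- Let n ≥ 1 and let a, b be Hermitian matrices in M_n(ℂ), with eigenvalues listed with multiplicity as α_1, …, α_n and β_1, …, β_n (e.g. via the spectral theorem for Hermitian matrices). Then the unitary distance equals the optimal matching distance: inf_{u ∈ U(n)} ‖a − u b u*‖ = min_{σ ∈ S_n} max_{1 ≤ i ≤ n} |α_i − β_{σ(i)}|, where ‖·‖ denotes the ℓ²-operator norm on M_n(ℂ), U(n) is the group of n×n complex unitary matrices, and S_n is the group of permutations of {1, …, n}. -/

import Mathlib

open Matrix Submodule Set Finset

noncomputable section

namespace WeylAux

/-- inner products are preserved by unitary matrices acting on Euclidean space. -/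
lemma inner_map (u : Matrix.unitaryGroup (Fin n) ℂ) (x y : EuclideanSpace ℂ (Fin n)) :
    (inner ℂ (Matrix.toEuclideanCLM (𝕜 := ℂ) (u : Matrix (Fin n) (Fin n) ℂ) x)
      (Matrix.toEuclideanCLM (𝕜 := ℂ) (u : Matrix (Fin n) (Fin n) ℂ) y) : ℂ) = inner ℂ x y := by
  set U := Matrix.toEuclideanCLM (𝕜 := ℂ) (u : Matrix (Fin n) (Fin n) ℂ) with hU
  have h1 : star U * U = 1 := by
    rw [hU, ← map_star, ← _root_.map_mul]
    rw [show star (u : Matrix (Fin n) (Fin n) ℂ) * u = 1 from Unitary.coe_star_mul_self u]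
    exact map_one _
  calc (inner ℂ (U x) (U y) : ℂ) = inner ℂ x ((ContinuousLinearMap.adjoint U) (U y)) := by
        rw [ContinuousLinearMap.adjoint_inner_right]
      _ = inner ℂ x y := by
        rw [← ContinuousLinearMap.star_eq_adjoint, ← ContinuousLinearMap.mul_apply, h1,
          ContinuousLinearMap.one_apply]

lemma norm_map (u : Matrix.unitaryGroup (Fin n) ℂ) (x : EuclideanSpace ℂ (Fin n)) :
    ‖Matrix.toEuclideanCLM (𝕜 := ℂ) (u : Matrix (Fin n) (Fin n) ℂ) x‖ = ‖x‖ := by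
  have := inner_map u x x
  have h2 : ‖Matrix.toEuclideanCLM (𝕜 := ℂ) (u : Matrix (Fin n) (Fin n) ℂ) x‖^2 = ‖x‖^2 := by
    rw [norm_sq_eq_re_inner (𝕜 := ℂ), norm_sq_eq_re_inner (𝕜 := ℂ), this]
  have h3 := congrArg Real.sqrt h2
  rwa [Real.sqrt_sq (norm_nonneg _), Real.sqrt_sq (norm_nonneg _)] at h3


lemma quad_ge {ι : Type*} [Fintype ι] (T : EuclideanSpace ℂ (Fin n) →L[ℂ] EuclideanSpace ℂ (Fin n))
    (f : ι → EuclideanSpace ℂ (Fin n)) (hf : Orthonormal ℂ f) (c : ι → ℝ)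
    (hT : ∀ i, T (f i) = (c i : ℂ) • f i) (r : ℝ) (hc : ∀ i, r ≤ c i)
    (x : EuclideanSpace ℂ (Fin n)) (hx : x ∈ Submodule.span ℂ (Set.range f)) :
    r * ‖x‖ ^ 2 ≤ (inner ℂ x (T x) : ℂ).re := by
  obtain ⟨l, rfl⟩ := (Submodule.mem_span_range_iff_exists_fun ℂ).mp hx
  have hTx : T (∑ i, l i • f i) = ∑ i, (l i * (c i : ℂ)) • f i := by
    rw [map_sum]
    congr 1; ext i
    rw [ContinuousLinearMap.map_smul, hT i, smul_smul]
  rw [hTx]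
  have h1 : (inner ℂ (∑ i, l i • f i) (∑ i, (l i * (c i : ℂ)) • f i) : ℂ)
      = ∑ i, (starRingEnd ℂ) (l i) * (l i * (c i : ℂ)) :=
    hf.inner_sum l (fun i => l i * (c i : ℂ)) Finset.univ
  have h2 : ‖∑ i, l i • f i‖ ^ 2 = ∑ i, ‖l i‖ ^ 2 := by
    have := hf.inner_sum l l Finset.univ
    have h3 : (inner ℂ (∑ i, l i • f i) (∑ i, l i • f i) : ℂ).re = ∑ i, ‖l i‖ ^ 2 := by
      rw [this, Complex.re_sum]
      congr 1; ext i
      rw [mul_comm, Complex.mul_conj, Complex.ofReal_re, Complex.normSq_eq_norm_sq]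
    rw [norm_sq_eq_re_inner (𝕜 := ℂ), RCLike.re_to_complex, h3]
  rw [h1, h2, Complex.re_sum, Finset.mul_sum]
  apply Finset.sum_le_sum
  intro i _
  have : ((starRingEnd ℂ) (l i) * (l i * (c i : ℂ))).re = ‖l i‖ ^ 2 * c i := by
    rw [← mul_assoc, mul_comm ((starRingEnd ℂ) (l i)) (l i), Complex.mul_conj,
      ← Complex.ofReal_mul, Complex.ofReal_re, Complex.normSq_eq_norm_sq]
  rw [this]
  have : (0:ℝ) ≤ ‖l i‖ ^ 2 := by positivity
  calc r * ‖l i‖ ^ 2 = ‖l i‖ ^ 2 * r := mul_comm _ _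
    _ ≤ ‖l i‖ ^ 2 * c i := by exact mul_le_mul_of_nonneg_left (hc i) this


lemma exists_ne_zero_mem_inf (s t : Submodule ℂ (EuclideanSpace ℂ (Fin n)))
    (h : n < Module.finrank ℂ s + Module.finrank ℂ t) :
    ∃ x : EuclideanSpace ℂ (Fin n), x ∈ s ⊓ t ∧ x ≠ 0 := by
  apply Submodule.exists_mem_ne_zero_of_ne_bot
  intro hbot
  have h1 := Submodule.finrank_sup_add_finrank_inf_eq s t
  rw [hbot, finrank_bot] at h1
  have h2 : Module.finrank ℂ ↥(s ⊔ t) ≤ n := by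
    have := Submodule.finrank_le (s ⊔ t)
    rwa [finrank_euclideanSpace, Fintype.card_fin] at this
  omega


lemma weyl_core (k : Fin n) (S T : EuclideanSpace ℂ (Fin n) →L[ℂ] EuclideanSpace ℂ (Fin n))
    (v w : Fin n → EuclideanSpace ℂ (Fin n))
    (hv : Orthonormal ℂ v) (hw : Orthonormal ℂ w) (α β : Fin n → ℝ)
    (hα : Monotone α) (hβ : Monotone β)
    (hS : ∀ i, S (v i) = (α i : ℂ) • v i) (hT : ∀ i, T (w i) = (β i : ℂ) • w i) :
    α k - β k ≤ ‖S - T‖ := by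
  set s := Submodule.span ℂ (Set.range (fun i : Set.Ici k => v i)) with hs
  set t := Submodule.span ℂ (Set.range (fun i : Set.Iic k => w i)) with ht
  have hslin : LinearIndependent ℂ (fun i : Set.Ici k => v i) :=
    (hv.linearIndependent).comp Subtype.val Subtype.val_injective
  have htlin : LinearIndependent ℂ (fun i : Set.Iic k => w i) :=
    (hw.linearIndependent).comp Subtype.val Subtype.val_injective
  have hcard : n < Module.finrank ℂ s + Module.finrank ℂ t := by
    rw [hs, ht, finrank_span_eq_card hslin, finrank_span_eq_card htlin,
      Fintype.card_Ici, Fintype.card_Iic, Fin.card_Ici, Fin.card_Iic]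
    have := k.isLt
    omega
  obtain ⟨x, ⟨hxs, hxt⟩, hx0⟩ := exists_ne_zero_mem_inf s t hcard
  have hlow : α k * ‖x‖ ^ 2 ≤ (inner ℂ x (S x) : ℂ).re :=
    quad_ge S (fun i : Set.Ici k => v i) (hv.comp Subtype.val Subtype.val_injective)
      (fun i => α i) (fun i => hS i) (α k) (fun i => hα i.2) x hxs
  have hup : (-(β k)) * ‖x‖ ^ 2 ≤ (inner ℂ x ((-T) x) : ℂ).re :=
    quad_ge (-T) (fun i : Set.Iic k => w i) (hw.comp Subtype.val Subtype.val_injective)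
      (fun i => -(β i))
      (fun i => by
        rw [ContinuousLinearMap.neg_apply, hT i]
        push_cast
        rw [← neg_smul])
      (-(β k)) (fun i => neg_le_neg (hβ i.2)) x hxt
  have hkey : (α k - β k) * ‖x‖ ^ 2 ≤ (inner ℂ x ((S - T) x) : ℂ).re := by
    have h1 : (inner ℂ x ((S - T) x) : ℂ) = inner ℂ x (S x) + inner ℂ x ((-T) x) := by
      rw [ContinuousLinearMap.sub_apply, ContinuousLinearMap.neg_apply, ← inner_add_right,
        sub_eq_add_neg]
    rw [h1, Complex.add_re]
    nlinarith [hlow, hup]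
  have hbound : (inner ℂ x ((S - T) x) : ℂ).re ≤ ‖S - T‖ * ‖x‖ ^ 2 := by
    calc (inner ℂ x ((S - T) x) : ℂ).re ≤ ‖(inner ℂ x ((S - T) x) : ℂ)‖ := Complex.re_le_norm _
      _ ≤ ‖x‖ * ‖(S - T) x‖ := norm_inner_le_norm x _
      _ ≤ ‖x‖ * (‖S - T‖ * ‖x‖) := by
          exact mul_le_mul_of_nonneg_left ((S - T).le_opNorm x) (norm_nonneg x)
      _ = ‖S - T‖ * ‖x‖ ^ 2 := by ring
  have hx2 : (0:ℝ) < ‖x‖ ^ 2 := by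
    have := norm_pos_iff.mpr hx0
    positivity
  nlinarith [hkey, hbound]

lemma diag_apply_le (d : Fin n → ℂ) (r : ℝ) (hr : 0 ≤ r) (hd : ∀ i, ‖d i‖ ≤ r)
    (x : EuclideanSpace ℂ (Fin n)) :
    ‖Matrix.toEuclideanCLM (𝕜 := ℂ) (Matrix.diagonal d) x‖ ≤ r * ‖x‖ := by
  have happ : ∀ i, (Matrix.toEuclideanCLM (𝕜 := ℂ) (Matrix.diagonal d) x) i = d i * x i := by
    intro i
    have := Matrix.ofLp_toEuclideanCLM (n := Fin n) (𝕜 := ℂ) (Matrix.diagonal d) x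
    have h2 := congrFun this i
    simpa [Matrix.mulVec_diagonal] using h2
  rw [EuclideanSpace.norm_eq, EuclideanSpace.norm_eq]
  have h1 : ∑ i, ‖(Matrix.toEuclideanCLM (𝕜 := ℂ) (Matrix.diagonal d) x) i‖ ^ 2
      ≤ r ^ 2 * ∑ i, ‖x i‖ ^ 2 := by
    rw [Finset.mul_sum]
    apply Finset.sum_le_sum
    intro i _
    rw [happ i, norm_mul, mul_pow]
    have h2 : ‖d i‖ ^ 2 ≤ r ^ 2 := pow_le_pow_left₀ (norm_nonneg _) (hd i) 2
    exact mul_le_mul_of_nonneg_right h2 (sq_nonneg _)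
  calc Real.sqrt (∑ i, ‖(Matrix.toEuclideanCLM (𝕜 := ℂ) (Matrix.diagonal d) x) i‖ ^ 2)
      ≤ Real.sqrt (r ^ 2 * ∑ i, ‖x i‖ ^ 2) := Real.sqrt_le_sqrt h1
    _ = r * Real.sqrt (∑ i, ‖x i‖ ^ 2) := by
        rw [Real.sqrt_mul (sq_nonneg r), Real.sqrt_sq hr]


/-- The key matrix identity for the easy direction. -/
lemma conj_eq (a b : Matrix (Fin n) (Fin n) ℂ)
    (ha : a.IsHermitian) (hb : b.IsHermitian) (σ : Equiv.Perm (Fin n)) :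
    ∃ u : Matrix.unitaryGroup (Fin n) ℂ,
      a - (u : Matrix (Fin n) (Fin n) ℂ) * b * star (u : Matrix (Fin n) (Fin n) ℂ)
        = (ha.eigenvectorUnitary : Matrix (Fin n) (Fin n) ℂ)
          * Matrix.diagonal (fun i => ((ha.eigenvalues i : ℂ) - (hb.eigenvalues (σ i) : ℂ)))
          * star (ha.eigenvectorUnitary : Matrix (Fin n) (Fin n) ℂ) := by
  have hWσu : ((hb.eigenvectorUnitary : Matrix (Fin n) (Fin n) ℂ).submatrix id ⇑σ)
      ∈ Matrix.unitaryGroup (Fin n) ℂ := by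
    rw [Matrix.mem_unitaryGroup_iff']
    rw [show star ((hb.eigenvectorUnitary : Matrix (Fin n) (Fin n) ℂ).submatrix id ⇑σ)
        = (star (hb.eigenvectorUnitary : Matrix (Fin n) (Fin n) ℂ)).submatrix ⇑σ id from
      Matrix.conjTranspose_submatrix _ _ _]
    have h := Matrix.submatrix_mul_equiv
      (star (hb.eigenvectorUnitary : Matrix (Fin n) (Fin n) ℂ))
      (hb.eigenvectorUnitary : Matrix (Fin n) (Fin n) ℂ)
      ⇑σ (Equiv.refl (Fin n)) ⇑σ
    simp only [Equiv.coe_refl, Matrix.submatrix_id_id] at h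
    rw [show ((star (hb.eigenvectorUnitary : Matrix (Fin n) (Fin n) ℂ)).submatrix ⇑σ id)
        = ((star (hb.eigenvectorUnitary : Matrix (Fin n) (Fin n) ℂ)).submatrix ⇑σ ⇑(Equiv.refl (Fin n))) from rfl]
    rw [show ((hb.eigenvectorUnitary : Matrix (Fin n) (Fin n) ℂ).submatrix id ⇑σ)
        = ((hb.eigenvectorUnitary : Matrix (Fin n) (Fin n) ℂ).submatrix ⇑(Equiv.refl (Fin n)) ⇑σ) from rfl]
    rw [Matrix.submatrix_mul_equiv, Unitary.coe_star_mul_self]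
    simp
  refine ⟨⟨(ha.eigenvectorUnitary : Matrix (Fin n) (Fin n) ℂ)
      * star ((hb.eigenvectorUnitary : Matrix (Fin n) (Fin n) ℂ).submatrix id ⇑σ),
      mul_mem ha.eigenvectorUnitary.2 (Unitary.star_mem hWσu)⟩, ?_⟩
  have hmid : star ((hb.eigenvectorUnitary : Matrix (Fin n) (Fin n) ℂ).submatrix id ⇑σ) * b
        * ((hb.eigenvectorUnitary : Matrix (Fin n) (Fin n) ℂ).submatrix id ⇑σ)
      = Matrix.diagonal (fun i => (hb.eigenvalues (σ i) : ℂ)) := by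
    have e1 : (star (hb.eigenvectorUnitary : Matrix (Fin n) (Fin n) ℂ)).submatrix ⇑σ id * b
        = (star (hb.eigenvectorUnitary : Matrix (Fin n) (Fin n) ℂ) * b).submatrix ⇑σ id := by
      have h := Matrix.submatrix_mul (star (hb.eigenvectorUnitary : Matrix (Fin n) (Fin n) ℂ)) b
        ⇑σ id id Function.bijective_id
      simpa using h.symm
    have e2 : (star (hb.eigenvectorUnitary : Matrix (Fin n) (Fin n) ℂ) * b).submatrix ⇑σ id
          * ((hb.eigenvectorUnitary : Matrix (Fin n) (Fin n) ℂ).submatrix id ⇑σ)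
        = (star (hb.eigenvectorUnitary : Matrix (Fin n) (Fin n) ℂ) * b
            * (hb.eigenvectorUnitary : Matrix (Fin n) (Fin n) ℂ)).submatrix ⇑σ ⇑σ := by
      have h := Matrix.submatrix_mul
        (star (hb.eigenvectorUnitary : Matrix (Fin n) (Fin n) ℂ) * b)
        (hb.eigenvectorUnitary : Matrix (Fin n) (Fin n) ℂ) ⇑σ id ⇑σ Function.bijective_id
      simpa using h.symm
    rw [show star ((hb.eigenvectorUnitary : Matrix (Fin n) (Fin n) ℂ).submatrix id ⇑σ)
        = (star (hb.eigenvectorUnitary : Matrix (Fin n) (Fin n) ℂ)).submatrix ⇑σ id from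
      Matrix.conjTranspose_submatrix _ _ _]
    rw [e1, e2, ← Unitary.conjStarAlgAut_star_apply (S := ℂ), hb.conjStarAlgAut_star_eigenvectorUnitary, Matrix.submatrix_diagonal _ _ σ.injective]
    rfl
  rw [Matrix.star_mul, star_star]
  rw [show (ha.eigenvectorUnitary : Matrix (Fin n) (Fin n) ℂ)
        * star ((hb.eigenvectorUnitary : Matrix (Fin n) (Fin n) ℂ).submatrix id ⇑σ) * b
        * (((hb.eigenvectorUnitary : Matrix (Fin n) (Fin n) ℂ).submatrix id ⇑σ)
          * star (ha.eigenvectorUnitary : Matrix (Fin n) (Fin n) ℂ))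
      = (ha.eigenvectorUnitary : Matrix (Fin n) (Fin n) ℂ)
        * (star ((hb.eigenvectorUnitary : Matrix (Fin n) (Fin n) ℂ).submatrix id ⇑σ) * b
          * ((hb.eigenvectorUnitary : Matrix (Fin n) (Fin n) ℂ).submatrix id ⇑σ))
        * star (ha.eigenvectorUnitary : Matrix (Fin n) (Fin n) ℂ) by noncomm_ring]
  rw [hmid]
  have hdiag : Matrix.diagonal (fun i => ((ha.eigenvalues i : ℂ) - (hb.eigenvalues (σ i) : ℂ)))
      = Matrix.diagonal (RCLike.ofReal ∘ ha.eigenvalues)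
        - Matrix.diagonal (fun i => (hb.eigenvalues (σ i) : ℂ)) := by
    rw [← Matrix.diagonal_sub]
    rfl
  rw [hdiag, Matrix.mul_sub, Matrix.sub_mul, ← Unitary.conjStarAlgAut_apply (S := ℂ) ha.eigenvectorUnitary (Matrix.diagonal (RCLike.ofReal ∘ ha.eigenvalues)), ← ha.spectral_theorem]


lemma clm_eigen (a : Matrix (Fin n) (Fin n) ℂ) (ha : a.IsHermitian) (i : Fin n) :
    Matrix.toEuclideanCLM (𝕜 := ℂ) a (ha.eigenvectorBasis i)
      = (ha.eigenvalues i : ℂ) • ha.eigenvectorBasis i := by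
  apply WithLp.ofLp_injective 2
  rw [Matrix.ofLp_toEuclideanCLM]
  simp only [WithLp.ofLp_smul]
  rw [show WithLp.ofLp (ha.eigenvectorBasis i) = ⇑(ha.eigenvectorBasis i) from rfl]
  rw [ha.mulVec_eigenvectorBasis]
  rw [RCLike.real_smul_eq_coe_smul (K := ℂ)]
  rfl


/-- The easy direction: for every permutation there is a unitary realizing the matching bound. -/
lemma easy_bound (a b : Matrix (Fin n) (Fin n) ℂ)
    (ha : a.IsHermitian) (hb : b.IsHermitian) (σ : Equiv.Perm (Fin n)) :
    ∃ u : Matrix.unitaryGroup (Fin n) ℂ,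
      ‖Matrix.toEuclideanCLM (𝕜 := ℂ)
          (a - (u : Matrix (Fin n) (Fin n) ℂ) * b * star (u : Matrix (Fin n) (Fin n) ℂ))‖
        ≤ ⨆ i : Fin n, |ha.eigenvalues i - hb.eigenvalues (σ i)| := by
  obtain ⟨u, hu⟩ := conj_eq a b ha hb σ
  refine ⟨u, ?_⟩
  set c := ⨆ i : Fin n, |ha.eigenvalues i - hb.eigenvalues (σ i)| with hc
  have hc0 : 0 ≤ c := Real.iSup_nonneg fun i => abs_nonneg _
  have hd : ∀ i, ‖(ha.eigenvalues i : ℂ) - (hb.eigenvalues (σ i) : ℂ)‖ ≤ c := by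
    intro i
    rw [← Complex.ofReal_sub, Complex.norm_real, Real.norm_eq_abs]
    exact le_ciSup (f := fun i : Fin n => |ha.eigenvalues i - hb.eigenvalues (σ i)|)
      (Set.Finite.bddAbove (Set.finite_range _)) i
  rw [hu]
  apply ContinuousLinearMap.opNorm_le_bound _ hc0
  intro x
  rw [_root_.map_mul, _root_.map_mul, ContinuousLinearMap.mul_apply,
    ContinuousLinearMap.mul_apply]
  have hVs : star (ha.eigenvectorUnitary : Matrix (Fin n) (Fin n) ℂ)
      ∈ Matrix.unitaryGroup (Fin n) ℂ := Unitary.star_mem ha.eigenvectorUnitary.2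
  rw [norm_map ha.eigenvectorUnitary]
  calc ‖Matrix.toEuclideanCLM (𝕜 := ℂ)
        (Matrix.diagonal (fun i => ((ha.eigenvalues i : ℂ) - (hb.eigenvalues (σ i) : ℂ))))
        (Matrix.toEuclideanCLM (𝕜 := ℂ) (star (ha.eigenvectorUnitary : Matrix (Fin n) (Fin n) ℂ)) x)‖
      ≤ c * ‖Matrix.toEuclideanCLM (𝕜 := ℂ) (star (ha.eigenvectorUnitary : Matrix (Fin n) (Fin n) ℂ)) x‖ :=
        diag_apply_le _ c hc0 hd _
    _ = c * ‖x‖ := by rw [norm_map ⟨_, hVs⟩]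


/-- The hard direction (Weyl's perturbation bound). -/
lemma hard_bound (hn : 1 ≤ n) (a b : Matrix (Fin n) (Fin n) ℂ)
    (ha : a.IsHermitian) (hb : b.IsHermitian) (u : Matrix.unitaryGroup (Fin n) ℂ) :
    (⨅ σ : Equiv.Perm (Fin n), ⨆ i : Fin n, |ha.eigenvalues i - hb.eigenvalues (σ i)|)
      ≤ ‖Matrix.toEuclideanCLM (𝕜 := ℂ)
          (a - (u : Matrix (Fin n) (Fin n) ℂ) * b * star (u : Matrix (Fin n) (Fin n) ℂ))‖ := by
  haveI : NeZero n := ⟨by omega⟩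
  set α := ha.eigenvalues
  set β := hb.eigenvalues
  set p := Tuple.sort α with hp
  set q := Tuple.sort β with hq
  set σ₀ : Equiv.Perm (Fin n) := q * p⁻¹ with hσ₀
  have hbdd : BddBelow (Set.range fun σ : Equiv.Perm (Fin n) =>
      ⨆ i : Fin n, |α i - β (σ i)|) := by
    refine ⟨0, ?_⟩
    rintro x ⟨σ, rfl⟩
    exact Real.iSup_nonneg fun i => abs_nonneg _
  refine le_trans (ciInf_le hbdd σ₀) ?_
  have hreindex : (⨆ i : Fin n, |α i - β (σ₀ i)|) = ⨆ j : Fin n, |α (p j) - β (q j)| := by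
    rw [← Function.Surjective.iSup_comp p.surjective (fun i => |α i - β (σ₀ i)|)]
    congr 1
    funext j
    rw [hσ₀]
    simp [Equiv.Perm.mul_apply]
  rw [hreindex]
  set U := Matrix.toEuclideanCLM (𝕜 := ℂ) (u : Matrix (Fin n) (Fin n) ℂ) with hU
  set S := Matrix.toEuclideanCLM (𝕜 := ℂ) a with hS
  set T := Matrix.toEuclideanCLM (𝕜 := ℂ)
    ((u : Matrix (Fin n) (Fin n) ℂ) * b * star (u : Matrix (Fin n) (Fin n) ℂ)) with hT
  have hUstar : Matrix.toEuclideanCLM (𝕜 := ℂ) (star (u : Matrix (Fin n) (Fin n) ℂ)) * U = 1 := by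
    rw [hU, ← _root_.map_mul, Unitary.coe_star_mul_self, _root_.map_one]
  set v : Fin n → EuclideanSpace ℂ (Fin n) := fun j => ha.eigenvectorBasis (p j) with hv
  set w : Fin n → EuclideanSpace ℂ (Fin n) := fun j => U (hb.eigenvectorBasis (q j)) with hw
  have hvon : Orthonormal ℂ v := (ha.eigenvectorBasis.orthonormal).comp ⇑p p.injective
  have hwon : Orthonormal ℂ w := by
    rw [orthonormal_iff_ite]
    intro i j
    rw [hw]
    simp only
    rw [hU, inner_map u]
    exact orthonormal_iff_ite.mp ((hb.eigenvectorBasis.orthonormal).comp ⇑q q.injective) i j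
  have hSv : ∀ j, S (v j) = ((α (p j) : ℂ)) • v j := fun j => clm_eigen a ha (p j)
  have hTw : ∀ j, T (w j) = ((β (q j) : ℂ)) • w j := by
    intro j
    rw [hT, _root_.map_mul, _root_.map_mul, ContinuousLinearMap.mul_apply,
      ContinuousLinearMap.mul_apply, hw]
    simp only
    rw [show Matrix.toEuclideanCLM (𝕜 := ℂ) (star (u : Matrix (Fin n) (Fin n) ℂ))
          (U (hb.eigenvectorBasis (q j)))
        = (Matrix.toEuclideanCLM (𝕜 := ℂ) (star (u : Matrix (Fin n) (Fin n) ℂ)) * U)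
            (hb.eigenvectorBasis (q j)) from rfl, hUstar, ContinuousLinearMap.one_apply]
    rw [clm_eigen b hb (q j), ContinuousLinearMap.map_smul]
  have hd : S - T = Matrix.toEuclideanCLM (𝕜 := ℂ)
      (a - (u : Matrix (Fin n) (Fin n) ℂ) * b * star (u : Matrix (Fin n) (Fin n) ℂ)) := by
    rw [hS, hT, ← map_sub]
  apply ciSup_le
  intro k
  rw [abs_sub_le_iff]
  constructor
  · rw [← hd]
    exact weyl_core k S T v w hvon hwon (α ∘ ⇑p) (β ∘ ⇑q)
      (Tuple.monotone_sort α) (Tuple.monotone_sort β) hSv hTw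
  · rw [← hd, ← norm_neg, neg_sub]
    exact weyl_core k T S w v hwon hvon (β ∘ ⇑q) (α ∘ ⇑p)
      (Tuple.monotone_sort β) (Tuple.monotone_sort α) hTw hSv


end WeylAux

/-- Weyl's theorem: for Hermitian matrices `a, b ∈ Mₙ(ℂ)`, the unitary distance
`inf_{u ∈ U(n)} ‖a − u b u*‖` (ℓ²-operator norm) equals the optimal matching distance
`min_{σ ∈ Sₙ} max_i |α_i − β_{σ(i)}|` between the eigenvalue lists. -/
theorem weyl_unitary_distance_eq_optimal_matching
    (n : ℕ) (hn : 1 ≤ n) (a b : Matrix (Fin n) (Fin n) ℂ)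
    (ha : a.IsHermitian) (hb : b.IsHermitian) :
    (⨅ u : Matrix.unitaryGroup (Fin n) ℂ,
        ‖Matrix.toEuclideanCLM (𝕜 := ℂ)
          (a - (u : Matrix (Fin n) (Fin n) ℂ) * b * star (u : Matrix (Fin n) (Fin n) ℂ))‖)
      = ⨅ σ : Equiv.Perm (Fin n), ⨆ i : Fin n, |ha.eigenvalues i - hb.eigenvalues (σ i)| := by
  haveI : NeZero n := ⟨by omega⟩
  apply le_antisymm
  · apply le_ciInf
    intro σ
    obtain ⟨u, hu⟩ := WeylAux.easy_bound a b ha hb σ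
    refine ciInf_le_of_le ?_ u hu
    refine ⟨0, ?_⟩
    rintro x ⟨u', rfl⟩
    exact norm_nonneg _
  · apply le_ciInf
    intro u
    exact WeylAux.hard_bound hn a b ha hb u
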